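/- arXiv:0809.0063 — 17 statements merged into one kernel-verified Lean document; each statement's English description precedes it below -/
import Mathlib

section
/- Let p ≥ 1 and q ≥ 1 be integers, let r̃ ≥ 0 be an integer, and for an integer i ≥ 0 define u_i = ⌊r̃/q^i⌋ − p·⌊⌊r̃/p⌋/q^i⌋. Then 0 ≤ u_i < p and u_i ≡ ⌊r̃/q^i⌋ (mod p); that is, u_i is exactly the remainder of ⌊r̃/q^i⌋ upon division by p. -/
lemma redq_aux (a b c : ℤ) (ha : 0 ≤ a) (hb : 0 < b) (hc : 0 < c) :
    a / b / c = a / (b * c) := by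
  lift a to ℕ using ha
  lift b to ℕ using hb.le
  lift c to ℕ using hc.le
  rw [← Int.natCast_mul, ← Int.natCast_div, ← Int.natCast_div, ← Int.natCast_div,
    Nat.div_div_eq_div_mul]

/-- Correctness of the compression phase of the REDQ algorithm:
for integers `p ≥ 1`, `q ≥ 1`, `r̃ ≥ 0` and `i ≥ 0`, the quantity
`u_i = ⌊r̃/q^i⌋ − p·⌊⌊r̃/p⌋/q^i⌋` satisfies `0 ≤ u_i < p` and is exactly the
remainder of `⌊r̃/q^i⌋` upon division by `p`. -/
theorem redq_compression_correct (p q r : ℤ) (hp : 1 ≤ p) (hq : 1 ≤ q)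
    (hr : 0 ≤ r) (i : ℕ) :
    0 ≤ r / q ^ i - p * ((r / p) / q ^ i) ∧
    r / q ^ i - p * ((r / p) / q ^ i) < p ∧
    r / q ^ i - p * ((r / p) / q ^ i) = (r / q ^ i) % p := by
  have hp0 : (0:ℤ) < p := hp
  have hqi : (0:ℤ) < q ^ i := pow_pos hq i
  have key : (r / p) / q ^ i = (r / q ^ i) / p := by
    rw [redq_aux r p (q ^ i) hr hp0 hqi, mul_comm,
      ← redq_aux r (q ^ i) p hr hqi hp0]
  have heq : r / q ^ i - p * ((r / p) / q ^ i) = (r / q ^ i) % p := by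
    rw [key, Int.emod_def]
  refine ⟨?_, ?_, heq⟩
  · rw [heq]; exact Int.emod_nonneg _ hp0.ne'
  · rw [heq]; exact Int.emod_lt_of_pos _ hp0
end

section
/- Let p ≥ 1, q ≥ 1, d ≥ 0 be integers and let μ̃_0, …, μ̃_d be nonnegative integers with μ̃_j < q for all j. Set r̃ = Σ_{j=0}^{d} μ̃_j q^j and define u_i = ⌊r̃/q^i⌋ − p·⌊⌊r̃/p⌋/q^i⌋ for 0 ≤ i ≤ d. Define μ_d = u_d mod p and μ_i = (u_i − q·u_{i+1}) mod p for 0 ≤ i ≤ d−1. Then 0 ≤ μ_i < p and μ_i ≡ μ̃_i (mod p) for every i = 0, …, d. -/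
open Finset in
/-- Full correctness of the REDQ algorithm (compression followed by correction):
for `r̃ = Σ_{j=0}^d μ̃_j q^j` with base-`q` digits `μ̃_j`, setting
`u_i = ⌊r̃/q^i⌋ − p·⌊⌊r̃/p⌋/q^i⌋`, `μ_d = u_d mod p` and
`μ_i = (u_i − q·u_{i+1}) mod p`, one has `0 ≤ μ_i < p` and `μ_i ≡ μ̃_i (mod p)`
for every `i = 0, …, d`. -/
theorem redq_correct (p q : ℤ) (hp : 1 ≤ p) (hq : 1 ≤ q)
    (d : ℕ) (μt : ℕ → ℤ) (hμt0 : ∀ j ≤ d, 0 ≤ μt j)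
    (hμtq : ∀ j ≤ d, μt j < q)
    (r : ℤ) (hr : r = ∑ j ∈ range (d + 1), μt j * q ^ j)
    (u : ℕ → ℤ) (hu : ∀ i ≤ d, u i = r / q ^ i - p * ((r / p) / q ^ i))
    (μ : ℕ → ℤ) (hμd : μ d = u d % p)
    (hμ : ∀ i < d, μ i = (u i - q * u (i + 1)) % p) :
    ∀ i ≤ d, 0 ≤ μ i ∧ μ i < p ∧ μ i ≡ μt i [ZMOD p] := by
  have hp0 : (0:ℤ) < p := hp
  have hq0 : (0:ℤ) < q := hq
  -- the low part is nonneg and less than q^i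
  have key : ∀ i ≤ d + 1,
      0 ≤ (∑ j ∈ range i, μt j * q ^ j) ∧ (∑ j ∈ range i, μt j * q ^ j) < q ^ i := by
    intro i hi
    induction i with
    | zero => simp
    | succ n ih =>
      have hn : n ≤ d := Nat.lt_succ_iff.mp hi
      obtain ⟨h0, h1⟩ := ih (le_trans (Nat.le_succ n) hi)
      rw [Finset.sum_range_succ]
      constructor
      · have := hμt0 n hn
        positivity
      · have hμn : μt n ≤ q - 1 := by linarith [hμtq n hn]
        have hqn : (0:ℤ) < q ^ n := pow_pos hq0 n
        have : μt n * q ^ n ≤ (q - 1) * q ^ n := by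
          exact mul_le_mul_of_nonneg_right hμn (le_of_lt hqn)
        have : (∑ j ∈ range n, μt j * q ^ j) + μt n * q ^ n < q ^ n + (q - 1) * q ^ n := by
          linarith
        calc (∑ j ∈ range n, μt j * q ^ j) + μt n * q ^ n
            < q ^ n + (q - 1) * q ^ n := this
          _ = q ^ (n + 1) := by ring
  -- the division identity
  have hdiv : ∀ i ≤ d, r / q ^ i = ∑ j ∈ Ico i (d + 1), μt j * q ^ (j - i) := by
    intro i hi
    have hsplit : r = (∑ j ∈ range i, μt j * q ^ j)
        + q ^ i * ∑ j ∈ Ico i (d + 1), μt j * q ^ (j - i) := by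
      rw [hr, Finset.mul_sum, ← Finset.sum_range_add_sum_Ico _ (by omega : i ≤ d + 1)]
      congr 1
      apply Finset.sum_congr rfl
      intro j hj
      have hij : i ≤ j := (Finset.mem_Ico.mp hj).1
      have : q ^ j = q ^ i * q ^ (j - i) := by
        rw [← pow_add]; congr 1; omega
      rw [this]; ring
    obtain ⟨h0, h1⟩ := key i (by omega)
    rw [hsplit, Int.add_mul_ediv_left _ _ (by positivity : (q:ℤ) ^ i ≠ 0),
      Int.ediv_eq_zero_of_lt h0 h1, zero_add]
  -- base case value
  have hB : r / q ^ d = μt d := by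
    rw [hdiv d le_rfl]
    rw [show Ico d (d + 1) = {d} by ext x; simp [Nat.lt_succ_iff]]
    simp
  -- recursive digit extraction
  have hA : ∀ i < d, r / q ^ i = μt i + q * (r / q ^ (i + 1)) := by
    intro i hid
    rw [hdiv i (le_of_lt hid), hdiv (i + 1) hid,
      Finset.sum_eq_sum_Ico_succ_bot (by omega : i < d + 1)]
    simp only [Nat.sub_self, pow_zero, mul_one]
    congr 1
    rw [Finset.mul_sum]
    apply Finset.sum_congr rfl
    intro j hj
    have hij : i + 1 ≤ j := (Finset.mem_Ico.mp hj).1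
    have : q ^ (j - i) = q * q ^ (j - (i + 1)) := by
      rw [← pow_succ']; congr 1; omega
    rw [this]; ring
  intro i hi
  have hbounds : ∀ x : ℤ, 0 ≤ x % p ∧ x % p < p := fun x =>
    ⟨Int.emod_nonneg x (ne_of_gt hp0), Int.emod_lt_of_pos x hp0⟩
  rcases eq_or_lt_of_le hi with heq | hlt
  · subst heq
    rw [hμd]
    refine ⟨(hbounds _).1, (hbounds _).2, ?_⟩
    have h1 : u i % p ≡ u i [ZMOD p] := Int.emod_emod_of_dvd _ dvd_rfl
    have h2 : u i ≡ μt i [ZMOD p] := by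
      rw [hu i le_rfl, hB]
      have : μt i - (μt i - p * (r / p / q ^ i)) = p * (r / p / q ^ i) := by ring
      exact Int.modEq_iff_dvd.mpr ⟨_, this⟩
    exact h1.trans h2
  · have hμi := hμ i hlt
    rw [hμi]
    refine ⟨(hbounds _).1, (hbounds _).2, ?_⟩
    have h1 : (u i - q * u (i + 1)) % p ≡ u i - q * u (i + 1) [ZMOD p] :=
      Int.emod_emod_of_dvd _ dvd_rfl
    have h2 : u i - q * u (i + 1) ≡ μt i [ZMOD p] := by
      rw [hu i (le_of_lt hlt), hu (i + 1) hlt]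
      have hval : r / q ^ i - p * (r / p / q ^ i)
          - q * (r / q ^ (i + 1) - p * (r / p / q ^ (i + 1)))
          = μt i + p * (q * (r / p / q ^ (i + 1)) - r / p / q ^ i) := by
        rw [hA i hlt]; ring
      rw [hval]
      have : μt i - (μt i + p * (q * (r / p / q ^ (i + 1)) - r / p / q ^ i))
          = p * -(q * (r / p / q ^ (i + 1)) - r / p / q ^ i) := by ring
      exact Int.modEq_iff_dvd.mpr ⟨_, this⟩
    exact h1.trans h2
end

section
/- Let p ≥ 2, k ≥ 1, n ≥ 1 and q be integers with q > n·k·(p−1)². For 1 ≤ l ≤ n let a_{l,0},…,a_{l,k−1} and b_{l,0},…,b_{l,k−1} be integers with 0 ≤ a_{l,i} ≤ p−1 and 0 ≤ b_{l,i} ≤ p−1, and set ã_l = Σ_{i=0}^{k−1} a_{l,i} q^i and b̃_l = Σ_{i=0}^{k−1} b_{l,i} q^i. Define r̃ = Σ_{l=1}^{n} ã_l · b̃_l and, for 0 ≤ j ≤ 2k−2, c_j = Σ_{l=1}^{n} Σ_{i=0}^{j} a_{l,i} b_{l,j−i} (with a_{l,i} = b_{l,i} = 0 for i ≥ k). Then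 r̃ = Σ_{j=0}^{2k−2} c_j q^j with 0 ≤ c_j < q for every j, so that c_j = ⌊r̃/q^j⌋ mod q; moreover r̃ < q^{2k−1}. Consequently, the residues c_j mod p are the coefficients of the dot product Σ_l (Σ_i a_{l,i} X^i)(Σ_i b_{l,i} X^i) computed in (ℤ/pℤ)[X]. -/
open Finset Polynomial

private lemma dqt_sum_lt_pow (q : ℕ) (hq : 2 ≤ q) (f : ℕ → ℕ) :
    ∀ m, (∀ j < m, f j < q) → ∑ j ∈ range m, f j * q ^ j < q ^ m := by
  intro m
  induction m with
  | zero => simp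
  | succ m ih =>
    intro hf
    have h1 : ∑ j ∈ range m, f j * q ^ j < q ^ m := ih fun j hj => hf j (by omega)
    have h2 : f m * q ^ m ≤ (q - 1) * q ^ m :=
      Nat.mul_le_mul_right _ (by have := hf m (by omega); omega)
    calc ∑ j ∈ range (m + 1), f j * q ^ j
        = (∑ j ∈ range m, f j * q ^ j) + f m * q ^ m := Finset.sum_range_succ _ _
      _ < q ^ m + (q - 1) * q ^ m := Nat.add_lt_add_of_lt_of_le h1 h2
      _ = (1 + (q - 1)) * q ^ m := by rw [add_mul, one_mul]
      _ = q ^ m * q := by rw [show 1 + (q - 1) = q by omega, mul_comm]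
      _ = q ^ (m + 1) := (pow_succ q m).symm

private lemma dqt_digit (q : ℕ) (hq : 2 ≤ q) (f : ℕ → ℕ) (m i : ℕ) (hi : i < m)
    (hf : ∀ j < m, f j < q) :
    (∑ j ∈ range m, f j * q ^ j) / q ^ i % q = f i := by
  have hm : m = i + (m - i) := by omega
  have key : ∀ M, ∑ j ∈ range (i + M), f j * q ^ j
      = (∑ j ∈ range i, f j * q ^ j) + q ^ i * ∑ t ∈ range M, f (i + t) * q ^ t := by
    intro M
    rw [Finset.sum_range_add, Finset.mul_sum]
    congr 1
    refine Finset.sum_congr rfl fun t _ => ?_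
    rw [pow_add]; ring
  have hsplit : ∑ j ∈ range m, f j * q ^ j
      = (∑ j ∈ range i, f j * q ^ j) + q ^ i * ∑ t ∈ range (m - i), f (i + t) * q ^ t := by
    conv_lhs => rw [hm]
    exact key (m - i)
  have hL : (∑ j ∈ range i, f j * q ^ j) < q ^ i :=
    dqt_sum_lt_pow q hq f i fun j hj => hf j (by omega)
  have hqi : 0 < q ^ i := pow_pos (by omega) i
  rw [hsplit, Nat.add_mul_div_left _ _ hqi, Nat.div_eq_of_lt hL, zero_add]
  have hmi : m - i = (m - i - 1) + 1 := by omega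
  rw [hmi, Finset.sum_range_succ']
  simp only [add_zero, pow_zero, mul_one]
  have : (∑ t ∈ range (m - i - 1), f (i + (t + 1)) * q ^ (t + 1))
      = (∑ t ∈ range (m - i - 1), f (i + (t + 1)) * q ^ t) * q := by
    rw [Finset.sum_mul]
    refine Finset.sum_congr rfl fun t _ => ?_
    rw [pow_succ]; ring
  rw [this, mul_comm, Nat.mul_add_mod]
  exact Nat.mod_eq_of_lt (hf i hi)

open Finset Polynomial in
/-- Kronecker substitution (DQT) for a dot product of polynomial vectors:
if `q > n·k·(p−1)²` and the coefficients lie in `{0,…,p−1}`, then the base-`q`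
digits of the integer dot product `r̃ = Σ_l ã_l b̃_l` are exactly the
coefficients `c_j` of the unreduced polynomial dot product, `r̃ < q^{2k−1}`,
and the `c_j mod p` are the coefficients of the dot product in `(ℤ/pℤ)[X]`. -/
theorem dqt_dot_product_correct (p k n q : ℕ) (hp : 2 ≤ p) (hk : 1 ≤ k)
    (hn : 1 ≤ n) (hq : n * k * (p - 1) ^ 2 < q)
    (a b : ℕ → ℕ → ℕ)
    (ha : ∀ l < n, ∀ i, a l i ≤ p - 1) (hb : ∀ l < n, ∀ i, b l i ≤ p - 1)
    (ha0 : ∀ l < n, ∀ i, k ≤ i → a l i = 0)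
    (hb0 : ∀ l < n, ∀ i, k ≤ i → b l i = 0)
    (r : ℕ)
    (hr : r = ∑ l ∈ range n,
      (∑ i ∈ range k, a l i * q ^ i) * (∑ i ∈ range k, b l i * q ^ i))
    (c : ℕ → ℕ)
    (hc : ∀ j, c j = ∑ l ∈ range n, ∑ i ∈ range (j + 1), a l i * b l (j - i)) :
    r = ∑ j ∈ range (2 * k - 1), c j * q ^ j ∧
    (∀ j < 2 * k - 1, c j < q) ∧
    (∀ j < 2 * k - 1, c j = r / q ^ j % q) ∧
    r < q ^ (2 * k - 1) ∧
    (∑ l ∈ range n,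
        (∑ i ∈ range k, C ((a l i : ZMod p)) * X ^ i) *
          (∑ i ∈ range k, C ((b l i : ZMod p)) * X ^ i)) =
      ∑ j ∈ range (2 * k - 1), C ((c j : ZMod p)) * X ^ j := by
  have hq2 : 2 ≤ q := by
    have h1 : 1 ≤ (p - 1) ^ 2 := Nat.one_le_pow _ _ (by omega)
    have : 1 ≤ n * k * (p - 1) ^ 2 := by
      calc 1 = 1 * 1 * 1 := by ring
        _ ≤ n * k * (p - 1) ^ 2 := by
          exact Nat.mul_le_mul (Nat.mul_le_mul hn hk) h1
    omega
  -- the ℕ-polynomial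
  set P : ℕ[X] := ∑ l ∈ range n,
      (∑ i ∈ range k, C (a l i) * X ^ i) * (∑ i ∈ range k, C (b l i) * X ^ i) with hP
  have hcoeffA : ∀ l < n, ∀ m, (∑ i ∈ range k, C (a l i) * X ^ i).coeff m = a l m := by
    intro l hl m
    rw [finset_sum_coeff]
    simp only [coeff_C_mul, coeff_X_pow, mul_ite, mul_one, mul_zero]
    rw [Finset.sum_ite_eq (range k) m (a l)]
    by_cases h : m ∈ range k
    · simp [h]
    · simp only [h, if_false]
      exact (ha0 l hl m (by simpa using h)).symm
  have hcoeffB : ∀ l < n, ∀ m, (∑ i ∈ range k, C (b l i) * X ^ i).coeff m = b l m := by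
    intro l hl m
    rw [finset_sum_coeff]
    simp only [coeff_C_mul, coeff_X_pow, mul_ite, mul_one, mul_zero]
    rw [Finset.sum_ite_eq (range k) m (b l)]
    by_cases h : m ∈ range k
    · simp [h]
    · simp only [h, if_false]
      exact (hb0 l hl m (by simpa using h)).symm
  have hcoeffP : ∀ j, P.coeff j = c j := by
    intro j
    rw [hP, finset_sum_coeff, hc]
    refine Finset.sum_congr rfl fun l hl => ?_
    rw [coeff_mul, Finset.Nat.sum_antidiagonal_eq_sum_range_succ_mk]
    refine Finset.sum_congr rfl fun i _ => ?_
    rw [hcoeffA l (mem_range.mp hl), hcoeffB l (mem_range.mp hl)]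
  have hczero : ∀ j, 2 * k - 1 ≤ j → c j = 0 := by
    intro j hj
    rw [hc]
    refine Finset.sum_eq_zero fun l hl => Finset.sum_eq_zero fun i hi => ?_
    by_cases h : i < k
    · rw [hb0 l (mem_range.mp hl) (j - i) (by omega), mul_zero]
    · rw [ha0 l (mem_range.mp hl) i (by omega), zero_mul]
  have hPeq : P = ∑ j ∈ range (2 * k - 1), C (c j) * X ^ j := by
    ext m
    rw [hcoeffP, finset_sum_coeff]
    simp only [coeff_C_mul, coeff_X_pow, mul_ite, mul_one, mul_zero]
    rw [Finset.sum_ite_eq (range (2 * k - 1)) m c]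
    by_cases h : m ∈ range (2 * k - 1)
    · simp [h]
    · simp only [h, if_false]
      exact hczero m (by simpa using h)
  have hrP : r = P.eval q := by
    rw [hr, hP, eval_finset_sum]
    refine Finset.sum_congr rfl fun l _ => ?_
    simp [eval_finset_sum]
  have hr' : r = ∑ j ∈ range (2 * k - 1), c j * q ^ j := by
    rw [hrP, hPeq, eval_finset_sum]
    simp
  have hclt : ∀ j, c j < q := by
    intro j
    have hle : c j ≤ n * (k * (p - 1) ^ 2) := by
      rw [hc]
      calc ∑ l ∈ range n, ∑ i ∈ range (j + 1), a l i * b l (j - i)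
          ≤ ∑ l ∈ range n, ∑ i ∈ range (j + 1),
              (if i < k then (p - 1) ^ 2 else 0) := by
            refine Finset.sum_le_sum fun l hl => Finset.sum_le_sum fun i _ => ?_
            by_cases h : i < k
            · simp only [h, if_true, sq]
              exact Nat.mul_le_mul (ha l (mem_range.mp hl) i) (hb l (mem_range.mp hl) (j - i))
            · rw [ha0 l (mem_range.mp hl) i (by omega), zero_mul]
              simp [h]
        _ ≤ ∑ _l ∈ range n, k * (p - 1) ^ 2 := by
            refine Finset.sum_le_sum fun l _ => ?_
            have hsub : (range (j + 1)).filter (· < k) ⊆ range k := fun x hx => by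
              simp only [Finset.mem_filter, Finset.mem_range] at hx ⊢
              exact hx.2
            calc (∑ i ∈ range (j + 1), if i < k then (p - 1) ^ 2 else 0)
                = ∑ _i ∈ (range (j + 1)).filter (· < k), (p - 1) ^ 2 :=
                  (Finset.sum_filter _ _).symm
              _ = ((range (j + 1)).filter (· < k)).card * (p - 1) ^ 2 := by
                  rw [Finset.sum_const, smul_eq_mul]
              _ ≤ k * (p - 1) ^ 2 := Nat.mul_le_mul_right _
                  ((Finset.card_le_card hsub).trans_eq (card_range k))
        _ = n * (k * (p - 1) ^ 2) := by rw [Finset.sum_const, card_range, smul_eq_mul]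
    calc c j ≤ n * (k * (p - 1) ^ 2) := hle
      _ = n * k * (p - 1) ^ 2 := by ring
      _ < q := hq
  refine ⟨hr', fun j _ => hclt j, fun j hj => ?_, ?_, ?_⟩
  · rw [hr']
    exact (dqt_digit q hq2 c (2 * k - 1) j hj fun i _ => hclt i).symm
  · rw [hr']
    exact dqt_sum_lt_pow q hq2 c (2 * k - 1) fun i _ => hclt i
  · have := congrArg (Polynomial.map (Nat.castRingHom (ZMod p))) hPeq
    rw [hP] at this
    simpa [Polynomial.map_sum, Polynomial.map_mul, Polynomial.map_pow,
      Polynomial.map_C, Polynomial.map_X] using this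
end

section
/- Let p ≥ 1, q ≥ 2, k ≥ 1 be integers and let r̃ be an integer with 0 ≤ r̃ < q^k. For 0 ≤ i ≤ k−1 define u_i = ⌊r̃/q^i⌋ − p·⌊⌊r̃/p⌋/q^i⌋. Then 0 ≤ u_i ≤ ⌊r̃/q^i⌋ < q^{k−i}; in particular both ⌊r̃/q^i⌋ and p·⌊⌊r̃/p⌋/q^i⌋ as well as their difference fit in (k−i)·log₂(q) bits. -/
/-- Non-overflow property of REDQ compression: if `0 ≤ r̃ < q^k` then for
`0 ≤ i ≤ k−1` the quantity `u_i = ⌊r̃/q^i⌋ − p·⌊⌊r̃/p⌋/q^i⌋` satisfies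
`0 ≤ u_i ≤ ⌊r̃/q^i⌋ < q^{k−i}`, so that it fits in `(k−i)·log₂(q)` bits. -/
theorem redq_compression_no_overflow (p q : ℤ) (hp : 1 ≤ p) (hq : 2 ≤ q)
    (k : ℕ) (hk : 1 ≤ k) (r : ℤ) (hr0 : 0 ≤ r) (hrk : r < q ^ k)
    (i : ℕ) (hi : i ≤ k - 1) :
    0 ≤ r / q ^ i - p * ((r / p) / q ^ i) ∧
    r / q ^ i - p * ((r / p) / q ^ i) ≤ r / q ^ i ∧
    r / q ^ i < q ^ (k - i) := by
  have hp0 : (0:ℤ) < p := by linarith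
  have hq0 : (0:ℤ) < q ^ i := by positivity
  have h1 : ((r / p) / q ^ i) * q ^ i ≤ r / p := Int.ediv_mul_le _ (ne_of_gt hq0)
  have h2 : p * (r / p) ≤ r := by
    have := Int.ediv_mul_le r (ne_of_gt hp0)
    linarith [this, mul_comm (r / p) p]
  have hle : p * ((r / p) / q ^ i) ≤ r / q ^ i := by
    rw [Int.le_ediv_iff_mul_le hq0]
    calc p * ((r / p) / q ^ i) * q ^ i = p * (((r / p) / q ^ i) * q ^ i) := by ring
      _ ≤ p * (r / p) := by exact mul_le_mul_of_nonneg_left h1 (le_of_lt hp0)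
      _ ≤ r := h2
  have hnn : 0 ≤ p * ((r / p) / q ^ i) :=
    mul_nonneg (le_of_lt hp0) (Int.ediv_nonneg (Int.ediv_nonneg hr0 (le_of_lt hp0)) (le_of_lt hq0))
  refine ⟨by linarith, by linarith, ?_⟩
  rw [Int.ediv_lt_iff_lt_mul hq0, ← pow_add]
  rwa [Nat.sub_add_cancel (by omega : i ≤ k)]
end

section
/- Let β ≥ 2 be an integer, and let r, p, k, u be integers with 0 ≤ r ≤ 2^β − 1, 3 ≤ p ≤ 2^β − 1, r = kp + u and 0 ≤ u < p. Let ε₁, ε₂ be real numbers with |ε₁| ≤ 2^{1−β} and |ε₂| ≤ 2^{1−β}, and set x = (r/p)(1 + ε₁)(1 + ε₂). Then x < k + 2; in particular ⌊x⌋ ≤ k + 1. -/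
/-- Floating point division never overshoots by more than one unit: with
`r = kp + u`, `0 ≤ u < p`, `p ≥ 3`, and relative rounding errors
`|ε₁|, |ε₂| ≤ 2^{1−β}`, the computed value `x = (r/p)(1+ε₁)(1+ε₂)` satisfies
`x < k + 2`, hence `⌊x⌋ ≤ k + 1`. -/
theorem fdiv_upper_bound (β : ℕ) (hβ : 2 ≤ β) (r p k u : ℤ)
    (hr0 : 0 ≤ r) (hr1 : r ≤ 2 ^ β - 1)
    (hp0 : 3 ≤ p) (hp1 : p ≤ 2 ^ β - 1)
    (hru : r = k * p + u) (hu0 : 0 ≤ u) (hu1 : u < p)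
    (ε₁ ε₂ : ℝ) (hε₁ : |ε₁| ≤ 2 ^ (1 - (β : ℤ))) (hε₂ : |ε₂| ≤ 2 ^ (1 - (β : ℤ)))
    (x : ℝ) (hx : x = ((r : ℝ) / (p : ℝ)) * (1 + ε₁) * (1 + ε₂)) :
    x < (k : ℝ) + 2 ∧ ⌊x⌋ ≤ k + 1 := by
  set e : ℝ := 2 ^ (1 - (β : ℤ)) with he_def
  set A : ℝ := (2 : ℝ) ^ β with hA_def
  have he0 : 0 < e := by positivity
  have hA0 : (0 : ℝ) < A := by positivity
  have heA : e * A = 2 := by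
    rw [he_def, hA_def, ← zpow_natCast (2 : ℝ) β, ← zpow_add₀ (by norm_num : (2:ℝ) ≠ 0)]
    norm_num
  have hA4 : (4 : ℝ) ≤ A := by
    rw [hA_def]
    calc (4 : ℝ) = 2 ^ 2 := by norm_num
    _ ≤ 2 ^ β := by
      apply pow_le_pow_right₀ (by norm_num) hβ
  have heh : e ≤ 1 / 2 := by
    nlinarith
  obtain ⟨hε₁l, hε₁u⟩ := abs_le.mp hε₁
  obtain ⟨hε₂l, hε₂u⟩ := abs_le.mp hε₂
  have hp0' : (3 : ℝ) ≤ (p : ℝ) := by exact_mod_cast hp0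
  have hppos : (0 : ℝ) < (p : ℝ) := by linarith
  have hrR : (0 : ℝ) ≤ (r : ℝ) := by exact_mod_cast hr0
  have hrp : (0 : ℝ) ≤ (r : ℝ) / (p : ℝ) := div_nonneg hrR (le_of_lt hppos)
  have h1p : (0 : ℝ) ≤ 1 + ε₁ := by linarith
  have h2p : (0 : ℝ) ≤ 1 + ε₂ := by linarith
  -- bound x by (r/p)(1+e)^2
  have hxle : x ≤ ((r : ℝ) / (p : ℝ)) * (1 + e) * (1 + e) := by
    rw [hx]
    have hstep1 : ((r : ℝ) / (p : ℝ)) * (1 + ε₁) ≤ ((r : ℝ) / (p : ℝ)) * (1 + e) :=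
      mul_le_mul_of_nonneg_left (by linarith) hrp
    have hnn : (0 : ℝ) ≤ ((r : ℝ) / (p : ℝ)) * (1 + e) :=
      mul_nonneg hrp (by linarith)
    exact mul_le_mul hstep1 (by linarith) h2p hnn
  -- real-number versions of the integer hypotheses
  have hruR : (r : ℝ) = (k : ℝ) * (p : ℝ) + (u : ℝ) := by exact_mod_cast hru
  have hr1R : (k : ℝ) * (p : ℝ) + (u : ℝ) ≤ A - 1 := by
    rw [← hruR, hA_def]
    exact_mod_cast hr1
  have hupR : (u : ℝ) ≤ (p : ℝ) - 1 := by
    have : u ≤ p - 1 := by omega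
    exact_mod_cast this
  have hu0R : (0 : ℝ) ≤ (u : ℝ) := by exact_mod_cast hu0
  -- key inequality
  have hkey : (r : ℝ) * (1 + e) * (1 + e) < ((k : ℝ) + 2) * (p : ℝ) := by
    rw [hruR]
    have h2e : (0 : ℝ) ≤ 2 * e + e ^ 2 := by positivity
    have h1 : ((k : ℝ) * p + u) * (2 * e + e ^ 2) ≤ (A - 1) * (2 * e + e ^ 2) :=
      mul_le_mul_of_nonneg_right hr1R h2e
    have h2 : e ^ 2 * A = 2 * e := by nlinarith
    nlinarith [sq_nonneg e, he0.le]
  have hmain : x < (k : ℝ) + 2 := by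
    have := hxle
    rw [div_mul_eq_mul_div, div_mul_eq_mul_div] at this
    have hlt : ((r : ℝ) * (1 + e) * (1 + e)) / (p : ℝ) < (k : ℝ) + 2 :=
      (div_lt_iff₀ hppos).mpr hkey
    linarith
  refine ⟨hmain, ?_⟩
  have : ⌊x⌋ < k + 2 := by
    rw [Int.floor_lt]
    push_cast
    linarith
  omega
end

section
/- Let β ≥ 2 be an integer, and let r, p, k, u be integers with 0 ≤ r ≤ 2^β − 1, 4 ≤ p ≤ 2^β − 1, r = kp + u and 0 ≤ u < p. Let ε₁, ε₂ be real numbers with |ε₁| ≤ 2^{1−β} and |ε₂| ≤ 2^{1−β}, and set x = (r/p)(1 + ε₁)(1 + ε₂). Then x > k − 1; in particular ⌊x⌋ ≥ k − 1. -/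
/-- Floating point division never undershoots by more than one unit: with
`r = kp + u`, `0 ≤ u < p`, `p ≥ 4`, and relative rounding errors
`|ε₁|, |ε₂| ≤ 2^{1−β}`, the computed value `x = (r/p)(1+ε₁)(1+ε₂)` satisfies
`x > k − 1`, hence `⌊x⌋ ≥ k − 1`. -/
theorem fdiv_lower_bound (β : ℕ) (hβ : 2 ≤ β) (r p k u : ℤ)
    (hr0 : 0 ≤ r) (hr1 : r ≤ 2 ^ β - 1)
    (hp0 : 4 ≤ p) (hp1 : p ≤ 2 ^ β - 1)
    (hru : r = k * p + u) (hu0 : 0 ≤ u) (hu1 : u < p)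
    (ε₁ ε₂ : ℝ) (hε₁ : |ε₁| ≤ 2 ^ (1 - (β : ℤ))) (hε₂ : |ε₂| ≤ 2 ^ (1 - (β : ℤ)))
    (x : ℝ) (hx : x = ((r : ℝ) / (p : ℝ)) * (1 + ε₁) * (1 + ε₂)) :
    (k : ℝ) - 1 < x ∧ k - 1 ≤ ⌊x⌋ := by
  have hE0 : (0:ℝ) < 2 ^ β := by positivity
  set ε : ℝ := 2 ^ (1 - (β : ℤ)) with hεdef
  have hεeq : ε = 2 / 2 ^ β := by
    rw [hεdef, zpow_sub₀ (two_ne_zero), zpow_one, zpow_natCast]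
  have hεpos : 0 < ε := by positivity
  have hε12 : ε ≤ 1 / 2 := by
    rw [hεeq, div_le_div_iff₀ hE0 (by norm_num)]
    have : (4:ℝ) ≤ 2 ^ β := by
      calc (4:ℝ) = 2 ^ 2 := by norm_num
      _ ≤ 2 ^ β := by exact pow_le_pow_right₀ one_le_two hβ
    linarith
  have hk0 : 0 ≤ k := by nlinarith
  have hk4 : k * 4 ≤ 2 ^ β - 1 := by nlinarith
  have hk4R : (k:ℝ) * 4 ≤ 2 ^ β - 1 := by exact_mod_cast hk4
  have hk0R : (0:ℝ) ≤ k := by exact_mod_cast hk0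
  have hpR : (0:ℝ) < p := by exact_mod_cast (by linarith : (0:ℤ) < p)
  have hkq : (k:ℝ) ≤ (r:ℝ) / p := by
    rw [le_div_iff₀ hpR]
    exact_mod_cast (by nlinarith : k * p ≤ r)
  have hqn : (0:ℝ) ≤ (r:ℝ) / p := by positivity
  have h2kε : 2 * (k:ℝ) * ε < 1 := by
    rw [hεeq]
    rw [show 2 * (k:ℝ) * (2 / 2 ^ β) = 4 * k / 2 ^ β by ring]
    rw [div_lt_one hE0]
    linarith
  have h1 : -ε ≤ ε₁ ∧ ε₁ ≤ ε := abs_le.mp hε₁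
  have h2 : -ε ≤ ε₂ ∧ ε₂ ≤ ε := abs_le.mp hε₂
  have hA : 0 ≤ 1 + ε₁ := by linarith [h1.1]
  have hB : 0 ≤ 1 + ε₂ := by linarith [h2.1]
  have key : (k:ℝ) - 1 < x := by
    rw [hx]
    have step1 : ((r:ℝ)/p) * (1 - ε) * (1 - ε) ≤ ((r:ℝ)/p) * (1 + ε₁) * (1 + ε₂) := by
      have h1ε : (0:ℝ) ≤ 1 - ε := by linarith
      have : (1 - ε) * (1 - ε) ≤ (1 + ε₁) * (1 + ε₂) := by
        apply mul_le_mul (by linarith [h1.1]) (by linarith [h2.1]) h1ε hA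
      calc ((r:ℝ)/p) * (1 - ε) * (1 - ε) = ((r:ℝ)/p) * ((1-ε)*(1-ε)) := by ring
        _ ≤ ((r:ℝ)/p) * ((1+ε₁)*(1+ε₂)) := by
            exact mul_le_mul_of_nonneg_left this hqn
        _ = ((r:ℝ)/p) * (1 + ε₁) * (1 + ε₂) := by ring
    have step2 : (k:ℝ) - 1 < ((r:ℝ)/p) * (1 - ε) * (1 - ε) := by
      have h1ε : (0:ℝ) ≤ 1 - ε := by linarith
      have : (k:ℝ) * (1-ε) * (1-ε) ≤ ((r:ℝ)/p) * (1-ε) * (1-ε) :=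
        mul_le_mul_of_nonneg_right (mul_le_mul_of_nonneg_right hkq h1ε) h1ε
      nlinarith [mul_nonneg hk0R (mul_self_nonneg ε)]
    linarith
  exact ⟨key, by
    have : ((k:ℤ) - 1 : ℤ) ≤ ⌊x⌋ := Int.le_floor.mpr (by push_cast; linarith)
    linarith⟩
end

section
/- Let β ≥ 2 be an integer, and let r, k, u be integers with 0 ≤ r ≤ 2^β − 1, r = 3k + u and 0 ≤ u < 3. Let ε₁, ε₂ be real numbers with |ε₁| ≤ 2^{−β} and |ε₂| ≤ 2^{1−β}, and set x = (r/3)(1 + ε₁)(1 + ε₂). Then x > k − 1; in particular ⌊x⌋ ≥ k − 1. -/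
/-- Floating point division by `p = 3`: since rounding `1/3` to a `β`-bit
mantissa incurs a relative error of at most `2^{−β}`, with `r = 3k + u`,
`0 ≤ u < 3`, `|ε₁| ≤ 2^{−β}` and `|ε₂| ≤ 2^{1−β}`, the computed value
`x = (r/3)(1+ε₁)(1+ε₂)` satisfies `x > k − 1`, hence `⌊x⌋ ≥ k − 1`. -/
theorem fdiv_lower_bound_three (β : ℕ) (hβ : 2 ≤ β) (r k u : ℤ)
    (hr0 : 0 ≤ r) (hr1 : r ≤ 2 ^ β - 1)
    (hru : r = 3 * k + u) (hu0 : 0 ≤ u) (hu1 : u < 3)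
    (ε₁ ε₂ : ℝ) (hε₁ : |ε₁| ≤ 2 ^ (-(β : ℤ))) (hε₂ : |ε₂| ≤ 2 ^ (1 - (β : ℤ)))
    (x : ℝ) (hx : x = ((r : ℝ) / 3) * (1 + ε₁) * (1 + ε₂)) :
    (k : ℝ) - 1 < x ∧ k - 1 ≤ ⌊x⌋ := by
  set ε : ℝ := 2 ^ (-(β : ℤ)) with hεdef
  have hεpos : 0 < ε := by positivity
  have h2 : (2 : ℝ) ^ (1 - (β : ℤ)) = 2 * ε := by
    rw [hεdef, show (1 - (β:ℤ)) = 1 + (-(β:ℤ)) by ring,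
      zpow_add₀ (by norm_num : (2:ℝ) ≠ 0), zpow_one]
  have hε1a := abs_le.mp hε₁
  have hε2a := abs_le.mp (hε₂.trans_eq h2)
  have hεsmall : ε ≤ 1/4 := by
    rw [hεdef]
    calc (2:ℝ) ^ (-(β:ℤ)) ≤ 2 ^ (-(2:ℤ)) := by
          apply zpow_le_zpow_right₀ (by norm_num)
          omega
      _ = 1/4 := by norm_num
  have hpow : ε * 2 ^ (β : ℤ) = 1 := by
    rw [hεdef, ← zpow_add₀ (by norm_num : (2:ℝ) ≠ 0)]
    simp
  have hrR : (0:ℝ) ≤ (r:ℝ) := by exact_mod_cast hr0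
  have hrU : (r:ℝ) ≤ 2 ^ (β:ℤ) - 1 := by
    have : ((r:ℝ)) ≤ ((2^β - 1 : ℤ) : ℝ) := by exact_mod_cast hr1
    push_cast at this
    rw [zpow_natCast]
    linarith
  have hkr : 3 * (k:ℝ) ≤ (r:ℝ) := by
    have : (r:ℝ) = 3 * k + u := by exact_mod_cast hru
    have hu : (0:ℝ) ≤ (u:ℝ) := by exact_mod_cast hu0
    linarith
  have hrε : (r:ℝ) * ε ≤ 1 - ε := by
    have := mul_le_mul_of_nonneg_right hrU hεpos.le
    nlinarith [hpow]
  have hb1 : 1 - ε ≤ 1 + ε₁ := by linarith [hε1a.1]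
  have hb2 : 1 - 2 * ε ≤ 1 + ε₂ := by linarith [hε2a.1]
  have hp1 : (0:ℝ) ≤ 1 - ε := by linarith
  have hp2 : (0:ℝ) ≤ 1 - 2 * ε := by linarith
  have hr3 : (0:ℝ) ≤ (r:ℝ)/3 := by linarith
  have hxlb : (r:ℝ)/3 * (1 - ε) * (1 - 2*ε) ≤ x := by
    rw [hx]
    apply mul_le_mul (mul_le_mul_of_nonneg_left hb1 hr3) hb2 hp2
    exact mul_nonneg hr3 (by linarith)
  have hmain : (k:ℝ) - 1 < x := by
    nlinarith [hrε, hkr, mul_nonneg (mul_nonneg hrR hεpos.le) hεpos.le]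
  refine ⟨hmain, ?_⟩
  have : ((k - 1 : ℤ) : ℝ) ≤ x := by push_cast; linarith
  exact Int.le_floor.mpr this
end

section
/- Let β ≥ 2 be an integer, and let r, p, k, u be integers with 0 ≤ r, 1 ≤ p, r = kp + u and 0 ≤ u < p. Let ε₁, ε₂ be real numbers with 0 ≤ ε₁ ≤ 2^{1−β} and 0 ≤ ε₂ ≤ 2^{1−β}, and set x = (r/p)(1 + ε₁)(1 + ε₂). If r < 2^β/(4 + 2^{2−β}), then k ≤ x < k + 1, and hence ⌊x⌋ = k. -/
/-- Case 1 (both operations rounded upward): with `r = kp + u`, `0 ≤ u < p`,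
`0 ≤ ε₁, ε₂ ≤ 2^{1−β}`, and `r < 2^β/(4 + 2^{2−β})`, the computed value
`x = (r/p)(1+ε₁)(1+ε₂)` satisfies `k ≤ x < k + 1`, hence `⌊x⌋ = k`. -/
theorem fdiv_case1 (β : ℕ) (hβ : 2 ≤ β) (r p k u : ℤ)
    (hr0 : 0 ≤ r) (hp0 : 1 ≤ p)
    (hru : r = k * p + u) (hu0 : 0 ≤ u) (hu1 : u < p)
    (ε₁ ε₂ : ℝ) (hε₁0 : 0 ≤ ε₁) (hε₁ : ε₁ ≤ 2 ^ (1 - (β : ℤ)))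
    (hε₂0 : 0 ≤ ε₂) (hε₂ : ε₂ ≤ 2 ^ (1 - (β : ℤ)))
    (x : ℝ) (hx : x = ((r : ℝ) / (p : ℝ)) * (1 + ε₁) * (1 + ε₂))
    (hr_bound : (r : ℝ) < 2 ^ (β : ℤ) / (4 + 2 ^ (2 - (β : ℤ)))) :
    (k : ℝ) ≤ x ∧ x < (k : ℝ) + 1 ∧ ⌊x⌋ = k := by
  set E : ℝ := 2 ^ (1 - (β : ℤ)) with hE
  have hE0 : 0 < E := by positivity
  have hpR : (0 : ℝ) < p := by exact_mod_cast hp0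
  have hrR : (0 : ℝ) ≤ r := by exact_mod_cast hr0
  have hruR : (r : ℝ) = k * p + u := by exact_mod_cast hru
  have huR : (u : ℝ) + 1 ≤ p := by exact_mod_cast hu1
  have hu0R : (0 : ℝ) ≤ u := by exact_mod_cast hu0
  -- key : r * (2E + E^2) < 1
  have hD0 : (0 : ℝ) < 4 + 2 ^ (2 - (β : ℤ)) := by positivity
  have hrb : (r : ℝ) * (4 + 2 ^ (2 - (β : ℤ))) < 2 ^ (β : ℤ) := by
    rw [← lt_div_iff₀ hD0]; exact hr_bound
  have hpow : (2 : ℝ) ^ (β : ℤ) * (2 * E + E ^ 2) = 4 + 2 ^ (2 - (β : ℤ)) := by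
    have h1 : E ^ 2 = (2:ℝ) ^ (2 - 2 * (β : ℤ)) := by
      rw [hE, ← zpow_natCast ((2:ℝ) ^ (1 - (β:ℤ))) 2, ← zpow_mul]; ring_nf
    have h2 : (2:ℝ) ^ (β : ℤ) * E = 2 ^ (1:ℤ) := by
      rw [hE, ← zpow_add₀ (by norm_num : (2:ℝ) ≠ 0)]; ring_nf; norm_num
    have h3 : (2:ℝ) ^ (β : ℤ) * E ^ 2 = 2 ^ (2 - (β:ℤ)) := by
      rw [h1, ← zpow_add₀ (by norm_num : (2:ℝ) ≠ 0)]; ring_nf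
    have : (2:ℝ) ^ (1:ℤ) = 2 := by norm_num
    nlinarith [h2, h3]
  have key : (r : ℝ) * (2 * E + E ^ 2) < 1 := by
    have h2b : (0:ℝ) < 2 ^ (β : ℤ) := by positivity
    rw [← hpow] at hrb
    nlinarith [hrb, h2b]
  have hkx : (k : ℝ) ≤ x := by
    rw [hx]
    have h1 : (k : ℝ) ≤ r / p := by
      rw [le_div_iff₀ hpR]; nlinarith
    have h2 : (0:ℝ) ≤ r / p := by positivity
    nlinarith [mul_nonneg h2 hε₁0, mul_nonneg (mul_nonneg h2 hε₁0) hε₂0, mul_nonneg h2 hε₂0]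
  have hx1 : x < (k : ℝ) + 1 := by
    rw [hx, div_mul_eq_mul_div, div_mul_eq_mul_div, div_lt_iff₀ hpR]
    have step1 : (r:ℝ) * (1 + ε₁) * (1 + ε₂) ≤ (r:ℝ) * (1 + E) * (1 + E) := by
      gcongr <;> nlinarith
    have step2 : (r:ℝ) * (1 + E) * (1 + E) < ((k:ℝ) + 1) * p := by nlinarith [key]
    linarith
  refine ⟨hkx, hx1, ?_⟩
  rw [Int.floor_eq_iff]
  exact ⟨hkx, hx1⟩
end

section
/- Let β ≥ 2 be an integer, and let r, p, k, u be integers with 0 ≤ r, 1 ≤ p, r = kp + u and 0 ≤ u < p. Let ε₁, ε₂ be real numbers with |ε₁| ≤ 2^{1−β} and |ε₂| ≤ 2^{−β}, and set x = (r/p)(1 + ε₁)(1 + ε₂). If r < 2^β/(3 + 2^{1−β}), then x < k + 1, and hence ⌊x⌋ ≤ k. The same conclusion holds with the roles of the error bounds exchanged, i.e. when |ε₁| ≤ 2^{−β} and |ε₂| ≤ 2^{1−β}. -/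
/-- Cases 2 and 4 (one operation rounded to nearest, the other directionally):
with `r = kp + u`, `0 ≤ u < p`, error bounds `|ε₁| ≤ 2^{1−β}, |ε₂| ≤ 2^{−β}`
(or the roles exchanged), and `r < 2^β/(3 + 2^{1−β})`, the computed value
`x = (r/p)(1+ε₁)(1+ε₂)` satisfies `x < k + 1`, hence `⌊x⌋ ≤ k`. -/
theorem fdiv_case2_case4 (β : ℕ) (hβ : 2 ≤ β) (r p k u : ℤ)
    (hr0 : 0 ≤ r) (hp0 : 1 ≤ p)
    (hru : r = k * p + u) (hu0 : 0 ≤ u) (hu1 : u < p)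
    (ε₁ ε₂ : ℝ)
    (hε : (|ε₁| ≤ 2 ^ (1 - (β : ℤ)) ∧ |ε₂| ≤ 2 ^ (-(β : ℤ))) ∨
          (|ε₁| ≤ 2 ^ (-(β : ℤ)) ∧ |ε₂| ≤ 2 ^ (1 - (β : ℤ))))
    (x : ℝ) (hx : x = ((r : ℝ) / (p : ℝ)) * (1 + ε₁) * (1 + ε₂))
    (hr_bound : (r : ℝ) < 2 ^ (β : ℤ) / (3 + 2 ^ (1 - (β : ℤ)))) :
    x < (k : ℝ) + 1 ∧ ⌊x⌋ ≤ k := by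
  set A : ℝ := 2 ^ (1 - (β : ℤ)) with hA
  set B : ℝ := 2 ^ (-(β : ℤ)) with hB
  have hA0 : (0:ℝ) < A := zpow_pos (by norm_num) _
  have hB0 : (0:ℝ) < B := zpow_pos (by norm_num) _
  have hpR : (0:ℝ) < (p:ℝ) := by exact_mod_cast lt_of_lt_of_le zero_lt_one hp0
  have hrR : (0:ℝ) ≤ (r:ℝ) := by exact_mod_cast hr0
  have hq0 : (0:ℝ) ≤ (r:ℝ) / p := div_nonneg hrR hpR.le
  -- q ≤ k + 1 - 1/p
  have hruR : (r:ℝ) = k * p + u := by exact_mod_cast hru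
  have huR : (u:ℝ) + 1 ≤ (p:ℝ) := by exact_mod_cast hu1
  have hq1 : (r:ℝ) / p ≤ (k:ℝ) + 1 - 1 / p := by
    rw [div_le_iff₀ hpR, sub_mul, one_div, inv_mul_cancel₀ hpR.ne']
    nlinarith
  -- product bound
  have hAB : A * B = 2 ^ (1 - 2 * (β : ℤ)) := by
    rw [hA, hB, ← zpow_add₀ (by norm_num : (2:ℝ) ≠ 0)]
    ring_nf
  have hprod : (1 + ε₁) * (1 + ε₂) ≤ 1 + (A + B + A * B) := by
    rcases hε with ⟨h1, h2⟩ | ⟨h1, h2⟩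
    · have e1 := abs_le.mp h1
      have e2 := abs_le.mp h2
      have : ε₁ * ε₂ ≤ A * B := by
        calc ε₁ * ε₂ ≤ |ε₁ * ε₂| := le_abs_self _
          _ = |ε₁| * |ε₂| := abs_mul _ _
          _ ≤ A * B := mul_le_mul h1 h2 (abs_nonneg _) hA0.le
      nlinarith
    · have e1 := abs_le.mp h1
      have e2 := abs_le.mp h2
      have : ε₁ * ε₂ ≤ A * B := by
        calc ε₁ * ε₂ ≤ |ε₁ * ε₂| := le_abs_self _
          _ = |ε₁| * |ε₂| := abs_mul _ _
          _ ≤ B * A := mul_le_mul h1 h2 (abs_nonneg _) hB0.le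
        linarith [mul_comm B A]
      nlinarith
  -- r * δ < 1 where δ = A + B + A*B = B * (3 + A)
  have hden : (0:ℝ) < 3 + A := by linarith
  have hr2 : (r:ℝ) * (3 + A) < 2 ^ (β : ℤ) := by
    rw [lt_div_iff₀ hden] at hr_bound; exact hr_bound
  have hB2 : B * 2 ^ (β : ℤ) = 1 := by
    rw [hB, ← zpow_add₀ (by norm_num : (2:ℝ) ≠ 0)]
    norm_num
  have hdelta : A + B + A * B = B * (3 + A) := by
    have : A = 2 * B := by
      rw [hA, hB, sub_eq_add_neg, zpow_add₀ (by norm_num : (2:ℝ) ≠ 0)]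
      norm_num
    rw [this]; ring
  have hrd : (r:ℝ) * (A + B + A * B) < 1 := by
    rw [hdelta]
    calc (r:ℝ) * (B * (3 + A)) = B * ((r:ℝ) * (3 + A)) := by ring
      _ < B * 2 ^ (β : ℤ) := by
          exact mul_lt_mul_of_pos_left hr2 hB0
      _ = 1 := hB2
  -- conclude
  have hxk : x < (k:ℝ) + 1 := by
    have h1 : x ≤ ((r:ℝ)/p) * (1 + (A + B + A * B)) := by
      rw [hx, mul_assoc]
      exact mul_le_mul_of_nonneg_left hprod hq0
    have h2 : ((r:ℝ)/p) * (A + B + A * B) < 1 / p := by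
      rw [div_mul_eq_mul_div, div_lt_div_iff₀ hpR hpR]
      have hd0 : 0 ≤ A + B + A * B := by positivity
      nlinarith
    nlinarith
  refine ⟨hxk, ?_⟩
  have : ⌊x⌋ < k + 1 := by
    rw [Int.floor_lt]; push_cast; exact hxk
  omega
end

section
/- Let β ≥ 2 be an integer, and let r, p, k, u be integers with 0 ≤ r, 1 ≤ p, r = kp + u and 0 ≤ u < p. Let ε₁, ε₂ be real numbers with 0 ≤ ε₁ ≤ 2^{1−β} and −2^{1−β} ≤ ε₂ ≤ 0, and set x = (r/p)(1 + ε₁)(1 + ε₂). If r < 2^{β−1}, then x < k + 1, and hence ⌊x⌋ ≤ k. The same conclusion holds with the signs exchanged, i.e. when −2^{1−β} ≤ ε₁ ≤ 0 and 0 ≤ ε₂ ≤ 2^{1−β}. -/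
/-- Cases 3 and 7 (one operation rounded upward, the other downward): with
`r = kp + u`, `0 ≤ u < p`, opposite-signed errors of magnitude at most
`2^{1−β}`, and `r < 2^{β−1}`, the computed value `x = (r/p)(1+ε₁)(1+ε₂)`
satisfies `x < k + 1`, hence `⌊x⌋ ≤ k`. -/
theorem fdiv_case3_case7 (β : ℕ) (hβ : 2 ≤ β) (r p k u : ℤ)
    (hr0 : 0 ≤ r) (hp0 : 1 ≤ p)
    (hru : r = k * p + u) (hu0 : 0 ≤ u) (hu1 : u < p)
    (ε₁ ε₂ : ℝ)
    (hε : (0 ≤ ε₁ ∧ ε₁ ≤ 2 ^ (1 - (β : ℤ)) ∧ -(2 ^ (1 - (β : ℤ))) ≤ ε₂ ∧ ε₂ ≤ 0) ∨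
          (-(2 ^ (1 - (β : ℤ))) ≤ ε₁ ∧ ε₁ ≤ 0 ∧ 0 ≤ ε₂ ∧ ε₂ ≤ 2 ^ (1 - (β : ℤ))))
    (x : ℝ) (hx : x = ((r : ℝ) / (p : ℝ)) * (1 + ε₁) * (1 + ε₂))
    (hr_bound : (r : ℝ) < 2 ^ ((β : ℤ) - 1)) :
    x < (k : ℝ) + 1 ∧ ⌊x⌋ ≤ k := by
  set δ : ℝ := 2 ^ (1 - (β : ℤ)) with hδ
  have hδ0 : 0 < δ := by positivity
  have hpR : (0:ℝ) < (p:ℝ) := by exact_mod_cast hp0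
  have hrR : (0:ℝ) ≤ (r:ℝ) := by exact_mod_cast hr0
  have hprod : (1 + ε₁) * (1 + ε₂) ≤ 1 + δ := by
    rcases hε with ⟨h1, h2, h3, h4⟩ | ⟨h1, h2, h3, h4⟩ <;> nlinarith
  have hpow : (2:ℝ) ^ ((β : ℤ) - 1) * δ = 1 := by
    rw [hδ, ← zpow_add₀ (by norm_num : (2:ℝ) ≠ 0)]
    norm_num
  have hx1 : x ≤ ((r : ℝ) / (p : ℝ)) * (1 + δ) := by
    rw [hx, mul_assoc]
    exact mul_le_mul_of_nonneg_left hprod (by positivity)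
  have hrδ : (r : ℝ) * δ < 1 := by
    calc (r : ℝ) * δ < 2 ^ ((β : ℤ) - 1) * δ := by
          exact mul_lt_mul_of_pos_right hr_bound hδ0
      _ = 1 := hpow
  have hup : (u : ℝ) + 1 ≤ (p : ℝ) := by exact_mod_cast hu1
  have hrup : (r : ℝ) = (k : ℝ) * p + u := by exact_mod_cast hru
  have hkey : ((r : ℝ) / (p : ℝ)) * (1 + δ) < (k : ℝ) + 1 := by
    rw [div_mul_eq_mul_div, div_lt_iff₀ hpR]
    nlinarith
  have hxk : x < (k : ℝ) + 1 := lt_of_le_of_lt hx1 hkey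
  refine ⟨hxk, ?_⟩
  have : ⌊x⌋ < k + 1 := Int.floor_lt.mpr (by push_cast; exact hxk)
  omega
end

section
/- Let β ≥ 2 be an integer, and let r, p, k, u be integers with 0 ≤ r, 1 ≤ p, r = kp + u and 0 ≤ u < p. Let ε₁, ε₂ be real numbers with |ε₁| ≤ 2^{−β} and |ε₂| ≤ 2^{−β}, and set x = (r/p)(1 + ε₁)(1 + ε₂). If r < 2^{β−1}/(1 + 2^{−1−β}), then x < k + 1, and hence ⌊x⌋ ≤ k. -/
/-- Case 5 (both operations rounded to nearest): with `r = kp + u`,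
`0 ≤ u < p`, `|ε₁|, |ε₂| ≤ 2^{−β}`, and `r < 2^{β−1}/(1 + 2^{−1−β})`, the
computed value `x = (r/p)(1+ε₁)(1+ε₂)` satisfies `x < k + 1`, hence `⌊x⌋ ≤ k`. -/
theorem fdiv_case5 (β : ℕ) (hβ : 2 ≤ β) (r p k u : ℤ)
    (hr0 : 0 ≤ r) (hp0 : 1 ≤ p)
    (hru : r = k * p + u) (hu0 : 0 ≤ u) (hu1 : u < p)
    (ε₁ ε₂ : ℝ) (hε₁ : |ε₁| ≤ 2 ^ (-(β : ℤ))) (hε₂ : |ε₂| ≤ 2 ^ (-(β : ℤ)))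
    (x : ℝ) (hx : x = ((r : ℝ) / (p : ℝ)) * (1 + ε₁) * (1 + ε₂))
    (hr_bound : (r : ℝ) < 2 ^ ((β : ℤ) - 1) / (1 + 2 ^ (-1 - (β : ℤ)))) :
    x < (k : ℝ) + 1 ∧ ⌊x⌋ ≤ k := by
  set e : ℝ := (2:ℝ) ^ (-(β : ℤ)) with he
  have he0 : (0:ℝ) < e := by positivity
  have hP0 : (0:ℝ) < (2:ℝ) ^ ((β : ℤ) - 1) := by positivity
  have he2 : (2:ℝ) ^ (-1 - (β : ℤ)) = e / 2 := by
    rw [he, show (-1 - (β:ℤ)) = (-(β:ℤ)) + (-1) from by ring,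
      zpow_add₀ (by norm_num : (2:ℝ) ≠ 0)]
    norm_num
    ring
  have hPe : (2:ℝ) ^ ((β : ℤ) - 1) * e = 1/2 := by
    rw [he, ← zpow_add₀ (by norm_num : (2:ℝ) ≠ 0),
      show ((β:ℤ) - 1 + -(β:ℤ)) = -1 by ring]
    norm_num
  have hr0R : (0:ℝ) ≤ (r:ℝ) := by exact_mod_cast hr0
  have hpR : (0:ℝ) < (p:ℝ) := by exact_mod_cast hp0
  have h1 := abs_le.mp hε₁
  have h2 := abs_le.mp hε₂
  have h12 : ε₁ * ε₂ ≤ e * e := by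
    calc ε₁ * ε₂ ≤ |ε₁ * ε₂| := le_abs_self _
      _ = |ε₁| * |ε₂| := abs_mul _ _
      _ ≤ e * e := mul_le_mul hε₁ hε₂ (abs_nonneg _) he0.le
  have hrb' : (r:ℝ) * (1 + e/2) < (2:ℝ) ^ ((β : ℤ) - 1) := by
    rw [he2] at hr_bound
    have hd : (0:ℝ) < 1 + e/2 := by linarith
    calc (r:ℝ) * (1 + e/2) < ((2:ℝ) ^ ((β : ℤ) - 1) / (1 + e/2)) * (1 + e/2) :=
          by exact mul_lt_mul_of_pos_right hr_bound hd
      _ = (2:ℝ) ^ ((β : ℤ) - 1) := by field_simp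
  have h3 : (r:ℝ) * (2*e + e*e) < 1 := by
    nlinarith [mul_lt_mul_of_pos_left hrb' (show (0:ℝ) < 2*e by linarith)]
  have h4 : (r:ℝ) * (1 + ε₁) * (1 + ε₂) < (r:ℝ) + 1 := by
    nlinarith [mul_le_mul_of_nonneg_left h1.2 hr0R,
      mul_le_mul_of_nonneg_left h2.2 hr0R,
      mul_le_mul_of_nonneg_left h12 hr0R]
  have hxk : x < (k:ℝ) + 1 := by
    have hpx : (p:ℝ) * x = (r:ℝ) * (1 + ε₁) * (1 + ε₂) := by
      rw [hx]; field_simp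
    have hrle : (r:ℝ) + 1 ≤ (p:ℝ) * ((k:ℝ) + 1) := by
      have : r + 1 ≤ p * (k + 1) := by nlinarith [hru, hu1]
      exact_mod_cast this
    have : (p:ℝ) * x < (p:ℝ) * ((k:ℝ) + 1) := by
      rw [hpx]; linarith
    exact lt_of_mul_lt_mul_left this hpR.le
  refine ⟨hxk, ?_⟩
  have : (⌊x⌋ : ℤ) < k + 1 := by
    rw [Int.floor_lt]
    push_cast
    exact hxk
  omega
end

section
/- Let β ≥ 2 be an integer, and let r, p, k, u be integers with 0 ≤ r ≤ 2^β − 1, 1 ≤ p, r = kp + u and 0 ≤ u < p. Let ε₁, ε₂ be real numbers with |ε₁| ≤ 2^{−β} and −2^{1−β} ≤ ε₂ ≤ 0, and set x = (r/p)(1 + ε₁)(1 + ε₂). Then x < k + 1, and hence ⌊x⌋ ≤ k, with no further restriction on r. -/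
/-- Case 6 (inverse rounded to nearest, product rounded downward): with
`0 ≤ r ≤ 2^β − 1`, `r = kp + u`, `0 ≤ u < p`, `|ε₁| ≤ 2^{−β}` and
`−2^{1−β} ≤ ε₂ ≤ 0`, the computed value `x = (r/p)(1+ε₁)(1+ε₂)` satisfies
`x < k + 1`, hence `⌊x⌋ ≤ k`, with no further restriction on `r`. -/
theorem fdiv_case6 (β : ℕ) (hβ : 2 ≤ β) (r p k u : ℤ)
    (hr0 : 0 ≤ r) (hr1 : r ≤ 2 ^ β - 1) (hp0 : 1 ≤ p)
    (hru : r = k * p + u) (hu0 : 0 ≤ u) (hu1 : u < p)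
    (ε₁ ε₂ : ℝ) (hε₁ : |ε₁| ≤ 2 ^ (-(β : ℤ)))
    (hε₂0 : -(2 ^ (1 - (β : ℤ))) ≤ ε₂) (hε₂1 : ε₂ ≤ 0)
    (x : ℝ) (hx : x = ((r : ℝ) / (p : ℝ)) * (1 + ε₁) * (1 + ε₂)) :
    x < (k : ℝ) + 1 ∧ ⌊x⌋ ≤ k := by
  set t : ℝ := 2 ^ (-(β : ℤ)) with ht
  have ht0 : 0 < t := by positivity
  have htmul : t * 2 ^ β = 1 := by
    rw [ht, ← zpow_natCast (2 : ℝ) β, ← zpow_add₀ (by norm_num : (2:ℝ) ≠ 0)]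
    simp
  have hp : (0 : ℝ) < (p : ℝ) := by exact_mod_cast hp0
  have hrR0 : (0 : ℝ) ≤ (r : ℝ) := by exact_mod_cast hr0
  have hrR1 : (r : ℝ) ≤ 2 ^ β - 1 := by exact_mod_cast hr1
  have hε₁' : ε₁ ≤ t := (abs_le.mp hε₁).2
  have hε₁'' : -t ≤ ε₁ := (abs_le.mp hε₁).1
  have ht1 : t ≤ 1 := by nlinarith [one_le_pow₀ (one_le_two (α := ℝ)) (n := β)]
  have h1ε₁ : 0 ≤ 1 + ε₁ := by linarith
  have hA0 : 0 ≤ (r : ℝ) / (p : ℝ) * (1 + ε₁) := by positivity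
  have hxle : x ≤ (r : ℝ) / (p : ℝ) * (1 + ε₁) := by
    rw [hx]
    nlinarith
  have hkey : (r : ℝ) / (p : ℝ) * (1 + ε₁) < (k : ℝ) + 1 := by
    rw [div_mul_eq_mul_div, div_lt_iff₀ hp]
    have hr' : (r : ℝ) = (k : ℝ) * (p : ℝ) + (u : ℝ) := by exact_mod_cast hru
    have hu0' : (0 : ℝ) ≤ (u : ℝ) := by exact_mod_cast hu0
    have hu1' : (u : ℝ) + 1 ≤ (p : ℝ) := by exact_mod_cast hu1
    have hrt : (r : ℝ) * t < 1 := by nlinarith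
    nlinarith
  have h1 : x < (k : ℝ) + 1 := lt_of_le_of_lt hxle hkey
  refine ⟨h1, ?_⟩
  have := Int.floor_le x
  have : (⌊x⌋ : ℝ) < (k : ℝ) + 1 := lt_of_le_of_lt this h1
  have : ⌊x⌋ < k + 1 := by exact_mod_cast this
  omega
end

section
/- Let r, p, k, u be integers with 0 ≤ r, 1 ≤ p, r = kp + u and 0 ≤ u < p. Let ε₁, ε₂ be real numbers with −1 < ε₁ ≤ 0 and −1 < ε₂ ≤ 0, and set x = (r/p)(1 + ε₁)(1 + ε₂). Then x ≤ k + 1 − 1/p < k + 1, and hence ⌊x⌋ ≤ k, with no restriction on the size of r. -/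
/-- Case 9 (both operations rounded downward): with `r = kp + u`, `0 ≤ u < p`
and `−1 < ε₁, ε₂ ≤ 0`, the computed value `x = (r/p)(1+ε₁)(1+ε₂)` satisfies
`x ≤ k + 1 − 1/p < k + 1`, hence `⌊x⌋ ≤ k`, with no restriction on `r`. -/
theorem fdiv_case9 (r p k u : ℤ)
    (hr0 : 0 ≤ r) (hp0 : 1 ≤ p)
    (hru : r = k * p + u) (hu0 : 0 ≤ u) (hu1 : u < p)
    (ε₁ ε₂ : ℝ) (hε₁0 : -1 < ε₁) (hε₁1 : ε₁ ≤ 0)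
    (hε₂0 : -1 < ε₂) (hε₂1 : ε₂ ≤ 0)
    (x : ℝ) (hx : x = ((r : ℝ) / (p : ℝ)) * (1 + ε₁) * (1 + ε₂)) :
    x ≤ (k : ℝ) + 1 - 1 / (p : ℝ) ∧ x < (k : ℝ) + 1 ∧ ⌊x⌋ ≤ k := by
  have hpR : (0 : ℝ) < (p : ℝ) := by exact_mod_cast hp0
  have hrR : (0 : ℝ) ≤ (r : ℝ) := by exact_mod_cast hr0
  have hq0 : (0 : ℝ) ≤ (r : ℝ) / (p : ℝ) := div_nonneg hrR hpR.le
  have h1 : (0 : ℝ) < 1 + ε₁ := by linarith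
  have h2 : (0 : ℝ) < 1 + ε₂ := by linarith
  have hxq : x ≤ (r : ℝ) / (p : ℝ) := by
    rw [hx]
    calc ((r : ℝ) / p) * (1 + ε₁) * (1 + ε₂)
        ≤ ((r : ℝ) / p) * (1 + ε₁) * 1 := by
          apply mul_le_mul_of_nonneg_left (by linarith) (by positivity)
      _ ≤ ((r : ℝ) / p) * 1 * 1 := by
          apply mul_le_mul_of_nonneg_right _ (by norm_num)
          exact mul_le_mul_of_nonneg_left (by linarith) hq0
      _ = (r : ℝ) / p := by ring
  have hqle : (r : ℝ) / (p : ℝ) ≤ (k : ℝ) + 1 - 1 / (p : ℝ) := by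
    rw [div_le_iff₀ hpR]
    have hrle : (r : ℝ) ≤ (k : ℝ) * p + p - 1 := by
      have : r ≤ k * p + p - 1 := by omega
      exact_mod_cast this
    have : ((k : ℝ) + 1 - 1 / p) * p = (k : ℝ) * p + p - 1 := by
      field_simp
    linarith [this]
  have h1' : x ≤ (k : ℝ) + 1 - 1 / (p : ℝ) := hxq.trans hqle
  have h2' : x < (k : ℝ) + 1 := by
    have : (0 : ℝ) < 1 / p := by positivity
    linarith
  refine ⟨h1', h2', ?_⟩
  have : ⌊x⌋ < k + 1 := by
    rw [Int.floor_lt]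
    push_cast
    exact h2'
  omega
end

section
/- Let β ≥ 1 be an integer, and let r, p, k, u be integers with 1 ≤ p ≤ 2^β − 1, 0 ≤ r ≤ 2^β − 1, r = kp + u and 0 ≤ u < p. Then 1/p > (k + 1)·2^{−β−1}, and consequently k + 1 − 1/p < (k + 1)(1 − 2^{−β−1}). -/
/-- Arithmetic core of Case 8: if `1 ≤ p ≤ 2^β − 1`, `0 ≤ r ≤ 2^β − 1` and
`r = kp + u` with `0 ≤ u < p`, then `1/p > (k + 1)·2^{−β−1}` and consequently
`k + 1 − 1/p < (k + 1)(1 − 2^{−β−1})`. -/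
theorem fdiv_case8_core (β : ℕ) (hβ : 1 ≤ β) (r p k u : ℤ)
    (hp0 : 1 ≤ p) (hp1 : p ≤ 2 ^ β - 1)
    (hr0 : 0 ≤ r) (hr1 : r ≤ 2 ^ β - 1)
    (hru : r = k * p + u) (hu0 : 0 ≤ u) (hu1 : u < p) :
    (k + 1 : ℝ) * 2 ^ (-(β : ℤ) - 1) < 1 / (p : ℝ) ∧
    (k : ℝ) + 1 - 1 / (p : ℝ) < ((k : ℝ) + 1) * (1 - 2 ^ (-(β : ℤ) - 1)) := by
  have hk0 : 0 ≤ k := by nlinarith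
  have hkp : (k + 1) * p ≤ 2 * (2 ^ β - 1) := by nlinarith
  have h2 : (2:ℝ) ^ (-(β : ℤ) - 1) = ((2:ℝ) ^ (β + 1))⁻¹ := by
    rw [show (-(β:ℤ)-1) = -((β+1 : ℕ) : ℤ) by push_cast; ring, zpow_neg, zpow_natCast]
  have hP : (0:ℝ) < 2 ^ (β + 1) := by positivity
  have hpR : (0:ℝ) < (p : ℝ) := by exact_mod_cast hp0.trans_lt' (by norm_num)
  have hmain : (k + 1 : ℝ) * 2 ^ (-(β : ℤ) - 1) < 1 / (p : ℝ) := by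
    rw [h2, ← div_eq_mul_inv, div_lt_div_iff₀ hP hpR]
    have : ((k + 1) * p : ℝ) ≤ 2 * (2 ^ β - 1) := by exact_mod_cast hkp
    have h2b : (2:ℝ) ^ (β + 1) = 2 * 2 ^ β := by ring
    nlinarith
  refine ⟨hmain, ?_⟩
  nlinarith [hmain]
end

section
/- Let p be a prime, let q and k ≥ 2 be integers, and let μ_0, …, μ_{2k−2} and u_0, …, u_{2k−2} be integers such that u_i ≡ Σ_{j=i}^{2k−2} μ_j q^{j−i} (mod p) for every 0 ≤ i ≤ 2k−2. Then, as polynomials over ℤ/pℤ, Σ_{i=0}^{2k−2} μ_i X^i = L + H, where L = Σ_{i=0}^{k−2} (u_i − q·u_{i+1}) X^i and H = u_{2k−2} X^{2k−2} + Σ_{i=k−1}^{2k−3} (u_i − q·u_{i+1}) X^i (all coefficients taken modulo p). -/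
open Finset Polynomial in
/-- Correctness of the fast Galois field dot product splitting: if
`u_i ≡ Σ_{j=i}^{2k−2} μ_j q^{j−i} (mod p)` for all `0 ≤ i ≤ 2k−2`, then over
`ℤ/pℤ` the polynomial `Σ_{i=0}^{2k−2} μ_i X^i` equals `L + H` where
`L = Σ_{i=0}^{k−2} (u_i − q·u_{i+1}) X^i` and
`H = u_{2k−2} X^{2k−2} + Σ_{i=k−1}^{2k−3} (u_i − q·u_{i+1}) X^i`. -/
theorem fgdp_split_correct (p : ℕ) (hp : p.Prime) (q : ℤ) (k : ℕ) (hk : 2 ≤ k)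
    (μ u : ℕ → ℤ)
    (hu : ∀ i ≤ 2 * k - 2,
      u i ≡ ∑ j ∈ Icc i (2 * k - 2), μ j * q ^ (j - i) [ZMOD (p : ℤ)]) :
    (∑ i ∈ range (2 * k - 1), C ((μ i : ZMod p)) * X ^ i) =
      (∑ i ∈ range (k - 1), C (((u i - q * u (i + 1) : ℤ) : ZMod p)) * X ^ i) +
      (C ((u (2 * k - 2) : ZMod p)) * X ^ (2 * k - 2) +
        ∑ i ∈ Icc (k - 1) (2 * k - 3),
          C (((u i - q * u (i + 1) : ℤ) : ZMod p)) * X ^ i) := by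
  -- key congruence for non-top coefficients
  have key : ∀ i, i + 1 ≤ 2 * k - 2 →
      ((μ i : ZMod p)) = ((u i - q * u (i + 1) : ℤ) : ZMod p) := by
    intro i hi
    rw [ZMod.intCast_eq_intCast_iff]
    have h1 := hu i (by omega)
    have h2 := hu (i + 1) hi
    have hsplit : (∑ j ∈ Icc i (2 * k - 2), μ j * q ^ (j - i)) =
        μ i + q * ∑ j ∈ Icc (i + 1) (2 * k - 2), μ j * q ^ (j - (i + 1)) := by
      have hins : Icc i (2 * k - 2) = insert i (Icc (i + 1) (2 * k - 2)) := by
        ext x; simp; omega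
      rw [hins, Finset.sum_insert (by simp), Finset.mul_sum]
      simp only [Nat.sub_self, pow_zero, mul_one]
      congr 1
      refine Finset.sum_congr rfl ?_
      intro j hj
      simp only [Finset.mem_Icc] at hj
      have hji : j - i = (j - (i + 1)) + 1 := by omega
      rw [hji, pow_succ]; ring
    have heq : μ i = (∑ j ∈ Icc i (2 * k - 2), μ j * q ^ (j - i)) -
        q * ∑ j ∈ Icc (i + 1) (2 * k - 2), μ j * q ^ (j - (i + 1)) := by
      rw [hsplit]; ring
    rw [heq]
    exact (h1.sub (h2.mul_left q)).symm
  -- top coefficient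
  have htop : ((μ (2 * k - 2) : ZMod p)) = ((u (2 * k - 2) : ℤ) : ZMod p) := by
    rw [ZMod.intCast_eq_intCast_iff]
    have := (hu (2 * k - 2) le_rfl).symm
    simpa using this
  rw [show 2 * k - 1 = (2 * k - 2) + 1 by omega, Finset.sum_range_succ, htop]
  have hmain : (∑ i ∈ range (2 * k - 2), C ((μ i : ZMod p)) * X ^ i) =
      (∑ i ∈ range (k - 1), C (((u i - q * u (i + 1) : ℤ) : ZMod p)) * X ^ i) +
      ∑ i ∈ Icc (k - 1) (2 * k - 3),
          C (((u i - q * u (i + 1) : ℤ) : ZMod p)) * X ^ i := by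
    have hsc : (∑ i ∈ range (2 * k - 2), C ((μ i : ZMod p)) * X ^ i) =
        ∑ i ∈ range (2 * k - 2), C (((u i - q * u (i + 1) : ℤ) : ZMod p)) * X ^ i := by
      refine Finset.sum_congr rfl ?_
      intro i hi
      simp only [Finset.mem_range] at hi
      rw [key i (by omega)]
    rw [hsc, ← Finset.sum_range_add_sum_Ico _ (show k - 1 ≤ 2 * k - 2 by omega)]
    congr 1
    apply Finset.sum_congr
    · ext x; simp; omega
    · intros; rfl
  rw [hmain]; ring
end

section
/- Let p ≥ 2, d ≥ 0, m ≥ 1 and Q be integers, set k = m(d+1), and assume k(p−1)² < Q. For 0 ≤ i ≤ d and 0 ≤ l ≤ m−1 let a_{i,l} and b_{i,l} be integers with 0 ≤ a_{i,l} ≤ p−1 and 0 ≤ b_{i,l} ≤ p−1. Define ã_l = Σ_{i=0}^{d} a_{i,l} Q^{d−i} (compression with decreasing powers) and b̃_l = Σ_{i=0}^{d} b_{i,l} Q^i (compression with increasing powers), and let S = Σ_{l=0}^{m−1} ã_l · b̃_l. Then ⌊S/Q^d⌋ mod Q = Σ_{l=0}^{m−1} Σ_{i=0}^{d} a_{i,l}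 b_{i,l}, i.e. the coefficient of Q^d in the base-Q expansion of S is exactly the full dot product of length k; moreover S < Q^{2d+1}. -/
open Finset in
/-- A sum of at most one nonzero term, each bounded by `C`, is at most `C`. -/
lemma cmm_sum_ite_le_of_unique (n C : ℕ) (P : ℕ → Prop) [DecidablePred P]
    (x : ℕ → ℕ) (hx : ∀ j < n, P j → x j ≤ C)
    (huniq : ∀ j1 j2, P j1 → P j2 → j1 = j2) :
    (∑ j ∈ range n, if P j then x j else 0) ≤ C := by
  rw [← Finset.sum_filter]
  rcases ((range n).filter P).eq_empty_or_nonempty with h | ⟨j0, hj0⟩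
  · rw [h]; simp
  · have hP0 : P j0 := (Finset.mem_filter.mp hj0).2
    have hj0n : j0 < n := Finset.mem_range.mp (Finset.mem_filter.mp hj0).1
    have hsub : (range n).filter P ⊆ {j0} := by
      intro j hj
      simp only [Finset.mem_filter] at hj
      simp [huniq j j0 hj.2 hP0]
    calc (∑ j ∈ (range n).filter P, x j) ≤ ∑ j ∈ ({j0} : Finset ℕ), x j :=
          Finset.sum_le_sum_of_subset hsub
      _ = x j0 := Finset.sum_singleton _ _
      _ ≤ C := hx j0 hj0n hP0

open Finset in
/-- A number whose base-`Q` digits are all `< Q` is `< Q ^ n`. -/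
lemma cmm_digits_lt (Q : ℕ) (hQ : 0 < Q) :
    ∀ (n : ℕ) (c : ℕ → ℕ), (∀ e < n, c e < Q) →
      (∑ e ∈ range n, c e * Q ^ e) < Q ^ n := by
  intro n
  induction n with
  | zero => intro c hc; simp
  | succ n ih =>
      intro c hc
      rw [Finset.sum_range_succ]
      have h1 : (∑ e ∈ range n, c e * Q ^ e) < Q ^ n :=
        ih c (fun e he => hc e (Nat.lt_succ_of_lt he))
      have h2 : c n < Q := hc n (Nat.lt_succ_self n)
      calc (∑ e ∈ range n, c e * Q ^ e) + c n * Q ^ n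
          < Q ^ n + c n * Q ^ n := by omega
        _ = (c n + 1) * Q ^ n := by ring
        _ ≤ Q * Q ^ n := by
            exact Nat.mul_le_mul_right _ (by omega)
        _ = Q ^ (n + 1) := by ring

open Finset in
/-- Digit extraction for a base-`Q` expansion with digits `< Q`. -/
lemma cmm_digit_extract (Q n t : ℕ) (hQ : 0 < Q) (c : ℕ → ℕ)
    (hc : ∀ e < n, c e < Q) (ht : t < n) :
    (∑ e ∈ range n, c e * Q ^ e) / Q ^ t % Q = c t := by
  obtain ⟨s, hs⟩ : ∃ s, n = t + (s + 1) := ⟨n - t - 1, by omega⟩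
  subst hs
  rw [Finset.sum_range_add]
  have hB : (∑ x ∈ range (s + 1), c (t + x) * Q ^ (t + x))
      = Q ^ t * ∑ x ∈ range (s + 1), c (t + x) * Q ^ x := by
    rw [Finset.mul_sum]
    refine Finset.sum_congr rfl fun x _ => ?_
    rw [pow_add]; ring
  rw [hB]
  have hA : (∑ e ∈ range t, c e * Q ^ e) < Q ^ t :=
    cmm_digits_lt Q hQ t c (fun e he => hc e (by omega))
  rw [Nat.add_mul_div_left _ _ (Nat.pow_pos hQ),
    Nat.div_eq_of_lt hA, Nat.zero_add]
  rw [Finset.sum_range_succ']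
  simp only [Nat.add_zero, pow_zero, Nat.mul_one]
  have : (∑ k ∈ range s, c (t + (k + 1)) * Q ^ (k + 1))
      = (∑ k ∈ range s, c (t + (k + 1)) * Q ^ k) * Q := by
    rw [Finset.sum_mul]
    refine Finset.sum_congr rfl fun x _ => ?_
    rw [pow_succ]; ring
  rw [this, Nat.add_comm, Nat.add_mul_mod_self_right]
  exact Nat.mod_eq_of_lt (hc t (by omega))

open Finset in
/-- Middle product recovery for Compressed Matrix Multiplication: packing the
left operands with decreasing powers of `Q` and the right operands with
increasing powers, and assuming `k(p−1)² < Q` with `k = m(d+1)`, the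
coefficient of `Q^d` in the base-`Q` expansion of `S = Σ_l ã_l b̃_l` is exactly
the full dot product of length `k`; moreover `S < Q^{2d+1}`. -/
theorem cmm_middle_product (p d m Q : ℕ) (hp : 2 ≤ p) (hm : 1 ≤ m)
    (k : ℕ) (hk : k = m * (d + 1)) (hQ : k * (p - 1) ^ 2 < Q)
    (a b : ℕ → ℕ → ℕ)
    (ha : ∀ i ≤ d, ∀ l < m, a i l ≤ p - 1)
    (hb : ∀ i ≤ d, ∀ l < m, b i l ≤ p - 1)
    (S : ℕ)
    (hS : S = ∑ l ∈ range m,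
      (∑ i ∈ range (d + 1), a i l * Q ^ (d - i)) *
        (∑ i ∈ range (d + 1), b i l * Q ^ i)) :
    S / Q ^ d % Q = ∑ l ∈ range m, ∑ i ∈ range (d + 1), a i l * b i l ∧
    S < Q ^ (2 * d + 1) := by
  classical
  have hp1 : 1 ≤ p - 1 := by omega
  have hk1 : 1 ≤ k := by
    subst hk
    exact Nat.one_le_iff_ne_zero.mpr (by positivity)
  have hQ0 : 0 < Q := by nlinarith
  set c : ℕ → ℕ := fun e => ∑ l ∈ range m, ∑ i ∈ range (d + 1),
      ∑ j ∈ range (d + 1), if d - i + j = e then a i l * b j l else 0 with hc_def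
  -- S is the base-Q expansion with digits c e
  have hSc : S = ∑ e ∈ range (2 * d + 1), c e * Q ^ e := by
    symm
    calc ∑ e ∈ range (2 * d + 1), c e * Q ^ e
        = ∑ e ∈ range (2 * d + 1), ∑ l ∈ range m, ∑ i ∈ range (d + 1),
            ∑ j ∈ range (d + 1),
              (if d - i + j = e then a i l * b j l else 0) * Q ^ e := by
          simp only [hc_def, Finset.sum_mul]
      _ = ∑ l ∈ range m, ∑ e ∈ range (2 * d + 1), ∑ i ∈ range (d + 1),
            ∑ j ∈ range (d + 1),
              (if d - i + j = e then a i l * b j l else 0) * Q ^ e :=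
          Finset.sum_comm
      _ = ∑ l ∈ range m, ∑ i ∈ range (d + 1), ∑ e ∈ range (2 * d + 1),
            ∑ j ∈ range (d + 1),
              (if d - i + j = e then a i l * b j l else 0) * Q ^ e :=
          Finset.sum_congr rfl fun l _ => Finset.sum_comm
      _ = ∑ l ∈ range m, ∑ i ∈ range (d + 1), ∑ j ∈ range (d + 1),
            ∑ e ∈ range (2 * d + 1),
              (if d - i + j = e then a i l * b j l else 0) * Q ^ e :=
          Finset.sum_congr rfl fun l _ => Finset.sum_congr rfl fun i _ =>
            Finset.sum_comm
      _ = ∑ l ∈ range m, ∑ i ∈ range (d + 1), ∑ j ∈ range (d + 1),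
            (a i l * b j l) * Q ^ (d - i + j) := by
          refine Finset.sum_congr rfl fun l _ => Finset.sum_congr rfl fun i hi =>
            Finset.sum_congr rfl fun j hj => ?_
          have hmem : d - i + j ∈ range (2 * d + 1) := by
            simp only [Finset.mem_range] at *
            omega
          rw [show (∑ e ∈ range (2 * d + 1),
              (if d - i + j = e then a i l * b j l else 0) * Q ^ e)
            = ∑ e ∈ range (2 * d + 1),
              (if d - i + j = e then (a i l * b j l) * Q ^ e else 0) from
            Finset.sum_congr rfl fun e _ => by rw [ite_mul, zero_mul]]
          rw [Finset.sum_ite_eq, if_pos hmem]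
      _ = S := by
          rw [hS]
          refine Finset.sum_congr rfl fun l _ => ?_
          rw [Finset.sum_mul_sum]
          refine Finset.sum_congr rfl fun i hi =>
            Finset.sum_congr rfl fun j hj => ?_
          rw [mul_mul_mul_comm, ← pow_add]
  -- each digit is < Q
  have hclt : ∀ e, c e < Q := by
    intro e
    have h1 : ∀ l ∈ range m, (∑ i ∈ range (d + 1), ∑ j ∈ range (d + 1),
        if d - i + j = e then a i l * b j l else 0) ≤ (d + 1) * (p - 1) ^ 2 := by
      intro l hl
      have hlm : l < m := Finset.mem_range.mp hl
      calc (∑ i ∈ range (d + 1), ∑ j ∈ range (d + 1),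
            if d - i + j = e then a i l * b j l else 0)
          ≤ ∑ _i ∈ range (d + 1), (p - 1) ^ 2 := by
            refine Finset.sum_le_sum fun i hi => ?_
            have hid : i ≤ d := by
              have := Finset.mem_range.mp hi; omega
            refine cmm_sum_ite_le_of_unique (d + 1) ((p - 1) ^ 2) _ _
              (fun j hj _ => ?_) (fun j1 j2 h1 h2 => by omega)
            have hjd : j ≤ d := by omega
            calc a i l * b j l ≤ (p - 1) * (p - 1) :=
                  Nat.mul_le_mul (ha i hid l hlm) (hb j hjd l hlm)
              _ = (p - 1) ^ 2 := (sq (p - 1)).symm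
        _ = (d + 1) * (p - 1) ^ 2 := by
            rw [Finset.sum_const, Finset.card_range, smul_eq_mul]
    calc c e ≤ ∑ _l ∈ range m, (d + 1) * (p - 1) ^ 2 := Finset.sum_le_sum h1
      _ = m * ((d + 1) * (p - 1) ^ 2) := by
          rw [Finset.sum_const, Finset.card_range, smul_eq_mul]
      _ = k * (p - 1) ^ 2 := by rw [hk]; ring
      _ < Q := hQ
  -- the middle digit is the dot product
  have hcd : c d = ∑ l ∈ range m, ∑ i ∈ range (d + 1), a i l * b i l := by
    simp only [hc_def]
    refine Finset.sum_congr rfl fun l _ => Finset.sum_congr rfl fun i hi => ?_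
    have hid : i ≤ d := by
      have := Finset.mem_range.mp hi; omega
    rw [show (∑ j ∈ range (d + 1), if d - i + j = d then a i l * b j l else 0)
        = ∑ j ∈ range (d + 1), if j = i then a i l * b j l else 0 from
      Finset.sum_congr rfl fun j hj => if_congr (by omega) rfl rfl]
    rw [Finset.sum_ite_eq', if_pos (Finset.mem_range.mpr (by omega))]
  constructor
  · rw [hSc, cmm_digit_extract Q (2 * d + 1) d hQ0 c (fun e _ => hclt e)
      (by omega), hcd]
  · rw [hSc]
    exact cmm_digits_lt Q hQ0 _ c fun e _ => hclt e
end

section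
/- Let Q ≥ 2, d_q ≥ 0, d_θ ≥ 0, p ≥ 2 and m ≥ 1 be integers with m(p−1)² < Q, and set Θ = Q^{d_q+1}. For 0 ≤ i ≤ d_q, 0 ≤ j ≤ d_θ and 0 ≤ l ≤ m−1 let a_{i,l} and b_{l,j} be integers with 0 ≤ a_{i,l} ≤ p−1 and 0 ≤ b_{l,j} ≤ p−1, and define S = Σ_{l=0}^{m−1} (Σ_{i=0}^{d_q} a_{i,l} Q^i)(Σ_{j=0}^{d_θ} b_{l,j} Θ^j). Then S = Σ_{i=0}^{d_q} Σ_{j=0}^{d_θ} c_{i,j} Q^{i + (d_q+1)j} with c_{i,j} = Σ_{l=0}^{m−1} a_{i,l} b_{l,j} and 0 ≤ c_{i,j} < Q for all i, j, and consequently c_{i,j} = ⌊S/Q^{i + (d_q+1)j}⌋ mod Q for all i, j. -/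
open Finset

lemma split_sum (f : ℕ → ℕ) (m n : ℕ) :
    ∑ k ∈ range (m + n), f k = (∑ k ∈ range m, f k) + ∑ k ∈ range n, f (m + k) := by
  rw [range_eq_Ico, ← Finset.sum_Ico_consecutive f (Nat.zero_le m) (Nat.le_add_right m n),
    Finset.sum_Ico_eq_sum_range, Finset.sum_Ico_eq_sum_range]
  simp

lemma sum_lt_pow (Q t : ℕ) (hQ : 1 ≤ Q) (d : ℕ → ℕ) (hd : ∀ k < t, d k < Q) :
    ∑ k ∈ range t, d k * Q ^ k < Q ^ t := by
  induction t with
  | zero => simp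
  | succ t ih =>
    rw [Finset.sum_range_succ]
    have h1 : ∑ k ∈ range t, d k * Q ^ k < Q ^ t :=
      ih (fun k hk => hd k (hk.trans (Nat.lt_succ_self t)))
    have h2 : d t ≤ Q - 1 := Nat.le_sub_one_of_lt (hd t (Nat.lt_succ_self t))
    calc ∑ k ∈ range t, d k * Q ^ k + d t * Q ^ t
        < Q ^ t + d t * Q ^ t := by omega
      _ ≤ Q ^ t + (Q - 1) * Q ^ t := by
          have := Nat.mul_le_mul_right (Q ^ t) h2; omega
      _ = Q ^ (t + 1) := by
          cases Q with
          | zero => omega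
          | succ q => simp only [Nat.add_sub_cancel, pow_succ]; ring

lemma digit_extract (Q n : ℕ) (hQ : 2 ≤ Q) (d : ℕ → ℕ) (hd : ∀ k < n, d k < Q)
    (t : ℕ) (ht : t < n) :
    (∑ k ∈ range n, d k * Q ^ k) / Q ^ t % Q = d t := by
  have hn : n = t + (n - t) := by omega
  rw [hn, split_sum]
  have hlow : ∑ k ∈ range t, d k * Q ^ k < Q ^ t :=
    sum_lt_pow Q t (by omega) d (fun k hk => hd k (by omega))
  have hrest : ∑ k ∈ range (n - t), d (t + k) * Q ^ (t + k)
      = Q ^ t * ∑ k ∈ range (n - t), d (t + k) * Q ^ k := by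
    rw [Finset.mul_sum]
    refine Finset.sum_congr rfl (fun k _ => ?_)
    ring
  rw [hrest, Nat.add_mul_div_left _ _ (pow_pos (by omega : 0 < Q) t),
    Nat.div_eq_of_lt hlow, Nat.zero_add]
  have hnt : n - t = 1 + (n - t - 1) := by omega
  rw [hnt, split_sum]
  simp only [Finset.range_one, Finset.sum_singleton, pow_zero, mul_one]
  have : ∑ k ∈ range (n - t - 1), d (t + (1 + k)) * Q ^ (1 + k)
      = Q * ∑ k ∈ range (n - t - 1), d (t + (1 + k)) * Q ^ k := by
    rw [Finset.mul_sum]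
    refine Finset.sum_congr rfl (fun k _ => ?_)
    ring
  rw [this, Nat.add_mul_mod_self_left, Nat.mod_eq_of_lt (by simpa using hd t ht)]
  simp

lemma sum_range_mul (f : ℕ → ℕ) (A B : ℕ) :
    ∑ k ∈ range (A * B), f k = ∑ j ∈ range B, ∑ i ∈ range A, f (i + A * j) := by
  induction B with
  | zero => simp
  | succ B ih =>
    have : A * (B + 1) = A * B + A := by ring
    rw [this, split_sum, ih, Finset.sum_range_succ]
    congr 1
    refine Finset.sum_congr rfl (fun i _ => ?_)
    congr 1; omega

open Finset in
/-- Full compression via bivariate Kronecker substitution: with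
`Θ = Q^{d_q+1}` and `m(p−1)² < Q`, the single integer
`S = Σ_l (Σ_i a_{i,l} Q^i)(Σ_j b_{l,j} Θ^j)` has base-`Q` digits
`c_{i,j} = Σ_l a_{i,l} b_{l,j} < Q` at positions `i + (d_q+1)j`, each inner
product being recovered independently. -/
theorem full_compression_correct (Q dq dθ p m : ℕ) (hQ2 : 2 ≤ Q) (hp : 2 ≤ p)
    (hm : 1 ≤ m) (hQ : m * (p - 1) ^ 2 < Q)
    (Θ : ℕ) (hΘ : Θ = Q ^ (dq + 1))
    (a b : ℕ → ℕ → ℕ)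
    (ha : ∀ i ≤ dq, ∀ l < m, a i l ≤ p - 1)
    (hb : ∀ l < m, ∀ j ≤ dθ, b l j ≤ p - 1)
    (S : ℕ)
    (hS : S = ∑ l ∈ range m,
      (∑ i ∈ range (dq + 1), a i l * Q ^ i) *
        (∑ j ∈ range (dθ + 1), b l j * Θ ^ j))
    (c : ℕ → ℕ → ℕ)
    (hc : ∀ i j, c i j = ∑ l ∈ range m, a i l * b l j) :
    S = ∑ i ∈ range (dq + 1), ∑ j ∈ range (dθ + 1),
          c i j * Q ^ (i + (dq + 1) * j) ∧
    (∀ i ≤ dq, ∀ j ≤ dθ, c i j < Q) ∧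
    (∀ i ≤ dq, ∀ j ≤ dθ, c i j = S / Q ^ (i + (dq + 1) * j) % Q) := by
  set A := dq + 1 with hA
  set B := dθ + 1 with hB
  -- bound on c
  have hcQ : ∀ i ≤ dq, ∀ j ≤ dθ, c i j < Q := by
    intro i hi j hj
    rw [hc]
    calc ∑ l ∈ range m, a i l * b l j
        ≤ ∑ l ∈ range m, (p - 1) * (p - 1) := by
          refine Finset.sum_le_sum fun l hl => ?_
          exact Nat.mul_le_mul (ha i hi l (mem_range.mp hl)) (hb l (mem_range.mp hl) j hj)
      _ = m * (p - 1) ^ 2 := by rw [Finset.sum_const, card_range, sq, smul_eq_mul]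
      _ < Q := hQ
  -- key identity
  have key : S = ∑ i ∈ range A, ∑ j ∈ range B, c i j * Q ^ (i + A * j) := by
    subst hΘ hS
    simp_rw [Finset.sum_mul_sum, hc, Finset.sum_mul]
    rw [Finset.sum_comm]
    refine Finset.sum_congr rfl fun i _ => ?_
    rw [Finset.sum_comm]
    refine Finset.sum_congr rfl fun j _ => ?_
    refine Finset.sum_congr rfl fun l _ => ?_
    rw [← pow_mul, pow_add]
    ring
  refine ⟨key, hcQ, ?_⟩
  intro i hi j hj
  set d : ℕ → ℕ := fun k => c (k % A) (k / A) with hd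
  have hA0 : 0 < A := Nat.succ_pos _
  have hdij : ∀ i' < A, ∀ j', d (i' + A * j') = c i' j' := by
    intro i' hi' j'
    simp only [hd, Nat.add_mul_mod_self_left, Nat.add_mul_div_left _ _ hA0,
      Nat.mod_eq_of_lt hi', Nat.div_eq_of_lt hi', Nat.zero_add]
  have hsum : S = ∑ k ∈ range (A * B), d k * Q ^ k := by
    rw [key, sum_range_mul (fun k => d k * Q ^ k) A B, Finset.sum_comm]
    refine Finset.sum_congr rfl fun jj _ => Finset.sum_congr rfl fun ii hii => ?_
    rw [hdij ii (mem_range.mp hii) jj]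
  have ht : i + A * j < A * B := by
    have h1 : i + A * j < A * (j + 1) := by
      have : A * (j + 1) = A * j + A := by ring
      omega
    have h2 : A * (j + 1) ≤ A * B := Nat.mul_le_mul_left A (by omega)
    omega
  have hdk : ∀ k < A * B, d k < Q := by
    intro k hk
    have h1 : k % A ≤ dq := by
      have := Nat.mod_lt k hA0
      omega
    have h2 : k / A ≤ dθ := by
      have : k / A < B := Nat.div_lt_of_lt_mul hk
      omega
    exact hcQ _ h1 _ h2
  rw [hsum, digit_extract Q (A * B) hQ2 d hdk _ ht, hdij i (by omega) j]
end
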